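/- Let V₊, V₋, V*, μ₊, μ₋, μ* ∈ ℂ with μ* V* ≠ 0, and consider the 4×4 matrix T with rows (-μ₋, μ*, μ*, 0), (V₋, -V*, V*, 0), (0, -μ* e^{μ* d}, -μ* e^{-μ* d}, μ₊ e^{-μ₊ d}), (0, V* e^{μ* d}, -V* e^{-μ* d}, V₊ e^{-μ₊ d}). If the coefficients Ã = (e^{μ₊d}/2)(μ*/μ₊)(e^{μ*d}(μ₋/μ* + V₋/V*) + e^{-μ*d}(μ₋/μ* − V₋/V*)), B̃ = (1/2)(μ₋/μ* − V₋/V*), C̃ = (1/2)(μ₋/μ* + V₋/V*) are defined and the dispersion relation e^{μ*d}(μ*V₊ + μ₊V*)(μ₋V* + μ*V₋) + e^{-μ*d}(μ*V₊ − μ₊V*)(μ₋V* − μ*V₋) = 0 holds (with μ₊ ≠ 0), then T (1, C̃, B̃, Ã)ᵀ = 0, i.e. T is singular. -/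

import Mathlib

set_option maxHeartbeats 1000000 in
/-- The 4×4 interface matrix of the three-layer problem is singular at the dispersion
relation: `T (1, C̃, B̃, Ã)ᵀ = 0`. -/
theorem stmt_8 (d : ℝ) (Vp Vm Vs μp μm μs : ℂ)
    (hμs : μs ≠ 0) (hVs : Vs ≠ 0) (hμp : μp ≠ 0)
    (hdisp : Complex.exp (μs * d) * (μs * Vp + μp * Vs) * (μm * Vs + μs * Vm)
        + Complex.exp (-μs * d) * (μs * Vp - μp * Vs) * (μm * Vs - μs * Vm) = 0)
    (At Bt Ct : ℂ)
    (hAt : At = (Complex.exp (μp * d) / 2) * (μs / μp) *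
        (Complex.exp (μs * d) * (μm / μs + Vm / Vs)
          + Complex.exp (-μs * d) * (μm / μs - Vm / Vs)))
    (hBt : Bt = (1 / 2) * (μm / μs - Vm / Vs))
    (hCt : Ct = (1 / 2) * (μm / μs + Vm / Vs)) :
    (Matrix.mulVec
      !![-μm, μs, μs, 0;
         Vm, -Vs, Vs, 0;
         0, -μs * Complex.exp (μs * d), -μs * Complex.exp (-μs * d), μp * Complex.exp (-μp * d);
         0, Vs * Complex.exp (μs * d), -Vs * Complex.exp (-μs * d), Vp * Complex.exp (-μp * d)]
      ![1, Ct, Bt, At]) = 0 := by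
  simp only [neg_mul, Complex.exp_neg] at hdisp ⊢
  field_simp [Complex.exp_ne_zero] at hdisp
  have hb : (2 * (μs * Vs) * (Complex.exp (μs * (d:ℂ)) * (2 * (μs * Vs)))) ≠ 0 := by
    simp [Complex.exp_ne_zero, hμs, hVs]
  have hd2 : (Complex.exp (μp * (d:ℂ)) * (2 * μp * (μs * Vs * (Complex.exp (μs * (d:ℂ)) * (μs * Vs))))) ≠ 0 := by
    simp [Complex.exp_ne_zero, hμs, hVs, hμp]
  funext i
  fin_cases i <;>
    simp only [Matrix.mulVec, dotProduct, Fin.sum_univ_four, Matrix.cons_val',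
      Matrix.cons_val_zero, Matrix.cons_val_one, Matrix.head_cons, Matrix.empty_val',
      Matrix.cons_val_fin_one, Matrix.head_fin_const, Matrix.cons_val_two, Matrix.tail_cons,
      Matrix.cons_val_three, Matrix.of_apply, Pi.zero_apply, Fin.mk_zero, Fin.mk_one,
      Fin.isValue, Fin.reduceFinMk, Matrix.cons_val] <;>
    subst hAt hBt hCt <;>
    simp only [neg_mul, Complex.exp_neg] <;>
    field_simp [Complex.exp_ne_zero]
  · ring
  · ring
  · ring
  · linear_combination hdisp
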